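/- For integers t0 ≥ 4, the rational number (-3 + 2·t0)/(2 - t0) equals the continued fraction [-3, -2,...,-2] with t0 - 3 trailing entries -2, and the associated product N = |(-3+1)·(-2+1)^{t0-4}·(-2)| equals 4. -/

import Mathlib

/-- The continued fraction `[r₀,...,r_k] = r₀ - 1/(r₁ - 1/(⋯ - 1/r_k))`. -/
def cf : List ℚ → ℚ
  | [] => 0
  | [r] => r
  | r :: s :: rest => r - 1 / cf (s :: rest)

/-- `N = |(r₀+1)(r₁+1)⋯(r_{k-1}+1) · r_k|` for the expansion `[r₀,...,r_k]`. -/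
def cfN (l : List ℚ) : ℚ := |((l.dropLast).map (· + 1)).prod * l.getLastD 0|

lemma cf_rep (n : ℕ) : cf (List.replicate (n+1) (-2 : ℚ)) = -((n:ℚ)+2)/((n:ℚ)+1) := by
  induction n with
  | zero => norm_num [cf]
  | succ k ih =>
    have h : List.replicate (k+1+1) (-2:ℚ) = -2 :: -2 :: List.replicate k (-2) := rfl
    rw [h, cf]
    rw [show ((-2:ℚ) :: List.replicate k (-2)) = List.replicate (k+1) (-2) from rfl, ih]
    have h2 : ((k:ℚ)+2) ≠ 0 := by positivity
    push_cast
    rw [one_div_div, div_neg, sub_neg_eq_add,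
      show (k:ℚ) + 1 + 1 = (k:ℚ) + 2 from by ring, eq_div_iff h2, add_mul,
      div_mul_cancel₀ _ h2]
    ring

theorem cf_case_c3 (t0 : ℤ) (h0 : 4 ≤ t0) :
    cf ((-3 : ℚ) :: List.replicate (t0 - 3).toNat (-2))
        = ((-3 : ℚ) + 2 * t0) / (2 - t0) ∧
      cfN ((-3 : ℚ) :: List.replicate (t0 - 3).toNat (-2)) = 4 := by
  obtain ⟨m, hm⟩ : ∃ m : ℕ, (t0 - 3).toNat = m + 1 := ⟨(t0 - 4).toNat, by omega⟩
  have hmc : (m : ℚ) = (t0 : ℚ) - 4 := by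
    have : (m : ℤ) = t0 - 4 := by omega
    exact_mod_cast congrArg (Int.cast : ℤ → ℚ) this
  have h04 : (4:ℚ) ≤ (t0:ℚ) := by exact_mod_cast h0
  have ht : (2 : ℚ) - t0 ≠ 0 := by linarith
  have h2 : (t0:ℚ) - 2 ≠ 0 := by linarith
  rw [hm]
  constructor
  · have h : ((-3:ℚ) :: List.replicate (m+1) (-2)) = -3 :: -2 :: List.replicate m (-2) := rfl
    rw [h, cf, show ((-2:ℚ) :: List.replicate m (-2)) = List.replicate (m+1) (-2) from rfl,
      cf_rep, hmc]
    rw [show (t0:ℚ) - 4 + 2 = (t0:ℚ) - 2 from by ring,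
      show (t0:ℚ) - 4 + 1 = (t0:ℚ) - 3 from by ring,
      one_div_div, div_neg, sub_neg_eq_add, eq_div_iff ht,
      show (2:ℚ) - (t0:ℚ) = -((t0:ℚ) - 2) from by ring, mul_neg, add_mul,
      div_mul_cancel₀ _ h2]
    ring
  · have h : ((-3:ℚ) :: List.replicate (m+1) (-2)) = ((-3:ℚ) :: List.replicate m (-2)) ++ [-2] := by
      rw [List.replicate_succ']; rfl
    rw [cfN, h, List.dropLast_concat, List.getLastD_concat]
    simp [List.map_replicate, List.prod_replicate, abs_mul, abs_pow]
    norm_num
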